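/- arXiv:math/0507017 — 4 statements merged into one kernel-verified Lean document; each statement's English description precedes it below -/
import Mathlib

section
/- Let l_1,...,l_N be positive reals, let u_1,...,u_N, v_1,...,v_N be nonnegative reals with ∑_{k=1}^N (u_k+v_k)=1. Suppose continuous functions X_1, X_2 : ℝ → ℝ are nonnegative and continuous functions Z_1, Z_2 : ℝ → ℝ satisfy Z_j(t) = X_j(t) + ∑_{k=1}^N (u_k Z_j(t-l_k) + v_k Z_{3-j}(t-l_k)) for all t, and Z_j(t) → 0 as t → -∞. Then Z_1 and Z_2 are nonnegative on ℝ. -/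
open Filter

lemma aux_step (N : ℕ) (l u v : ℕ → ℝ)
    (hu : ∀ k, 0 ≤ u k) (hv : ∀ k, 0 ≤ v k)
    (hsum : ∑ k ∈ Finset.Icc 1 N, (u k + v k) = 1)
    (X Z W : ℝ → ℝ) (hX : ∀ t, 0 ≤ X t)
    (heq : ∀ t, Z t = X t + ∑ k ∈ Finset.Icc 1 N,
      (u k * Z (t - l k) + v k * W (t - l k)))
    (m s : ℝ) (hZs : Z s = m)
    (hge : ∀ k ∈ Finset.Icc 1 N, m ≤ Z (s - l k) ∧ m ≤ W (s - l k)) :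
    ∃ k ∈ Finset.Icc 1 N, Z (s - l k) = m ∨ W (s - l k) = m := by
  by_contra h
  push_neg at h
  have hstrict : ∀ k ∈ Finset.Icc 1 N, m < Z (s - l k) ∧ m < W (s - l k) := by
    intro k hk
    obtain ⟨h1, h2⟩ := h k hk
    obtain ⟨g1, g2⟩ := hge k hk
    exact ⟨lt_of_le_of_ne g1 (Ne.symm h1), lt_of_le_of_ne g2 (Ne.symm h2)⟩
  have hk0 : ∃ k ∈ Finset.Icc 1 N, 0 < u k + v k := by
    by_contra hc
    push_neg at hc
    have hz : ∑ k ∈ Finset.Icc 1 N, (u k + v k) = 0 :=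
      Finset.sum_eq_zero fun k hk =>
        le_antisymm (hc k hk) (by have := hu k; have := hv k; linarith)
    rw [hz] at hsum
    norm_num at hsum
  obtain ⟨k₀, hk₀, hk₀pos⟩ := hk0
  have hlt : ∑ k ∈ Finset.Icc 1 N, (u k + v k) * m
      < ∑ k ∈ Finset.Icc 1 N, (u k * Z (s - l k) + v k * W (s - l k)) := by
    apply Finset.sum_lt_sum
    · intro k hk
      obtain ⟨g1, g2⟩ := hstrict k hk
      have h1 : u k * m ≤ u k * Z (s - l k) := mul_le_mul_of_nonneg_left g1.le (hu k)
      have h2 : v k * m ≤ v k * W (s - l k) := mul_le_mul_of_nonneg_left g2.le (hv k)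
      linarith
    · refine ⟨k₀, hk₀, ?_⟩
      obtain ⟨g1, g2⟩ := hstrict k₀ hk₀
      rcases lt_or_ge 0 (u k₀) with hpos | hle
      · have h1 : u k₀ * m < u k₀ * Z (s - l k₀) := by
          exact mul_lt_mul_of_pos_left g1 hpos
        have h2 : v k₀ * m ≤ v k₀ * W (s - l k₀) := mul_le_mul_of_nonneg_left g2.le (hv k₀)
        linarith
      · have hu0 : u k₀ = 0 := le_antisymm hle (hu k₀)
        have hvpos : 0 < v k₀ := by
          have := hu k₀; linarith
        have h2 : v k₀ * m < v k₀ * W (s - l k₀) := mul_lt_mul_of_pos_left g2 hvpos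
        rw [hu0]
        linarith
  have hsum' : ∑ k ∈ Finset.Icc 1 N, (u k + v k) * m = m := by
    rw [← Finset.sum_mul, hsum, one_mul]
  have := heq s
  rw [hZs] at this
  have hXs := hX s
  linarith [hsum' ▸ hlt]

theorem stmt_3 (N : ℕ) (l u v : ℕ → ℝ)
    (hl : ∀ k ∈ Finset.Icc 1 N, 0 < l k)
    (hu : ∀ k, 0 ≤ u k) (hv : ∀ k, 0 ≤ v k)
    (hsum : ∑ k ∈ Finset.Icc 1 N, (u k + v k) = 1)
    (X₁ X₂ Z₁ Z₂ : ℝ → ℝ)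
    (hX₁c : Continuous X₁) (hX₂c : Continuous X₂)
    (hX₁ : ∀ t, 0 ≤ X₁ t) (hX₂ : ∀ t, 0 ≤ X₂ t)
    (hZ₁c : Continuous Z₁) (hZ₂c : Continuous Z₂)
    (heq₁ : ∀ t, Z₁ t = X₁ t + ∑ k ∈ Finset.Icc 1 N,
      (u k * Z₁ (t - l k) + v k * Z₂ (t - l k)))
    (heq₂ : ∀ t, Z₂ t = X₂ t + ∑ k ∈ Finset.Icc 1 N,
      (u k * Z₂ (t - l k) + v k * Z₁ (t - l k)))
    (hlim₁ : Tendsto Z₁ atBot (nhds 0)) (hlim₂ : Tendsto Z₂ atBot (nhds 0)) :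
    ∀ t, 0 ≤ Z₁ t ∧ 0 ≤ Z₂ t := by
  by_contra h
  push_neg at h
  obtain ⟨t₀, ht₀⟩ := h
  set g : ℝ → ℝ := fun t => min (Z₁ t) (Z₂ t) with hgdef
  have hgc : Continuous g := hZ₁c.min hZ₂c
  have hglim : Tendsto g atBot (nhds 0) := by
    have := hlim₁.min hlim₂
    simpa using this
  have hne : (Finset.Icc 1 N).Nonempty := by
    by_contra hne
    rw [Finset.not_nonempty_iff_eq_empty] at hne
    rw [hne] at hsum
    simp at hsum
  set ε : ℝ := (Finset.Icc 1 N).inf' hne l with hεdef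
  have hε : 0 < ε := by
    rw [hεdef, Finset.lt_inf'_iff]
    exact hl
  have hεle : ∀ k ∈ Finset.Icc 1 N, ε ≤ l k := fun k hk => Finset.inf'_le l hk
  -- g t₀ < 0
  have hc : g t₀ < 0 := by
    by_contra hcon
    push_neg at hcon
    have h1 := le_trans hcon (min_le_left (Z₁ t₀) (Z₂ t₀))
    have h2 := le_trans hcon (min_le_right (Z₁ t₀) (Z₂ t₀))
    exact absurd h2 (not_le.mpr (ht₀ h1))
  set c : ℝ := g t₀ with hcdef
  -- eventually g s > c/2
  have hev : ∀ᶠ s in atBot, c / 2 < g s := by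
    apply hglim.eventually
    exact eventually_gt_nhds (by linarith)
  obtain ⟨T₀, hT₀⟩ := eventually_atBot.mp hev
  set T : ℝ := min T₀ t₀ with hTdef
  have hTt₀ : T ≤ t₀ := min_le_right _ _
  have hT : ∀ s ≤ T, c / 2 < g s := fun s hs => hT₀ s (le_trans hs (min_le_left _ _))
  -- min on compact interval
  obtain ⟨s₀, hs₀mem, hs₀min⟩ := (isCompact_Icc (a := T) (b := t₀)).exists_isMinOn
    ⟨t₀, Set.right_mem_Icc.mpr hTt₀⟩ hgc.continuousOn
  set m : ℝ := g s₀ with hmdef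
  have hm : m < 0 := lt_of_le_of_lt (hs₀min (Set.right_mem_Icc.mpr hTt₀)) hc
  have hmc : m ≤ c := hs₀min (Set.right_mem_Icc.mpr hTt₀)
  -- global lower bound on (-∞, t₀]
  have hglobal : ∀ s ≤ t₀, m ≤ g s := by
    intro s hs
    rcases le_or_gt T s with h1 | h1
    · exact hs₀min ⟨h1, hs⟩
    · have := hT s h1.le
      linarith
  -- key propagation step
  have hkey : ∀ s ≤ t₀, g s = m → ∃ k ∈ Finset.Icc 1 N, g (s - l k) = m := by
    intro s hs hgs
    have hge : ∀ k ∈ Finset.Icc 1 N, m ≤ Z₁ (s - l k) ∧ m ≤ Z₂ (s - l k) := by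
      intro k hk
      have hlk := hl k hk
      have hsl : s - l k ≤ t₀ := by linarith
      have := hglobal (s - l k) hsl
      exact ⟨le_trans this (min_le_left _ _), le_trans this (min_le_right _ _)⟩
    have hgmin : ∀ k ∈ Finset.Icc 1 N,
        (Z₁ (s - l k) = m ∨ Z₂ (s - l k) = m) → g (s - l k) = m := by
      intro k hk hor
      obtain ⟨h1, h2⟩ := hge k hk
      rcases hor with h | h
      · exact le_antisymm (h ▸ min_le_left _ _) (le_min h1 h2)
      · exact le_antisymm (h ▸ min_le_right _ _) (le_min h1 h2)
    rcases min_cases (Z₁ s) (Z₂ s) with ⟨heq, _⟩ | ⟨heq, _⟩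
    · have hZ1s : Z₁ s = m := by rw [hgdef] at hgs; simp only at hgs; rw [← hgs, heq]
      obtain ⟨k, hk, hor⟩ := aux_step N l u v hu hv hsum X₁ Z₁ Z₂ hX₁ heq₁ m s hZ1s hge
      exact ⟨k, hk, hgmin k hk hor⟩
    · have hZ2s : Z₂ s = m := by rw [hgdef] at hgs; simp only at hgs; rw [← hgs, heq]
      have hge' : ∀ k ∈ Finset.Icc 1 N, m ≤ Z₂ (s - l k) ∧ m ≤ Z₁ (s - l k) :=
        fun k hk => ⟨(hge k hk).2, (hge k hk).1⟩
      obtain ⟨k, hk, hor⟩ := aux_step N l u v hu hv hsum X₂ Z₂ Z₁ hX₂ heq₂ m s hZ2s hge'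
      exact ⟨k, hk, hgmin k hk hor.symm⟩
  -- build sequence going to -∞ where g = m
  have hseq : ∀ n : ℕ, ∃ s, s ≤ t₀ - n * ε ∧ g s = m := by
    intro n
    induction n with
    | zero => exact ⟨s₀, by simpa using hs₀mem.2, rfl⟩
    | succ n ih =>
      obtain ⟨s, hs, hgs⟩ := ih
      have hnε : (0 : ℝ) ≤ n * ε := by positivity
      have hst₀ : s ≤ t₀ := by linarith
      obtain ⟨k, hk, hgk⟩ := hkey s hst₀ hgs
      refine ⟨s - l k, ?_, hgk⟩
      have := hεle k hk
      push_cast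
      linarith
  -- contradiction
  obtain ⟨n, hn⟩ := exists_nat_gt ((t₀ - T) / ε)
  have hn' : t₀ - T < n * ε := by
    rw [div_lt_iff₀ hε] at hn
    linarith
  obtain ⟨s, hs, hgs⟩ := hseq n
  have hsT : s ≤ T := by linarith
  have := hT s hsT
  rw [hgs] at this
  linarith
end

section
/- Let l_1,...,l_N be positive reals and u_1,...,u_N, v_1,...,v_N nonnegative reals with ∑(u_k+v_k)=1. There exists a constant C > 0 such that for every Π ≥ 0 and every quadruple of continuous functions X_1, X_2, Z_1, Z_2 : ℝ → ℝ satisfying |X_j(t)| ≤ Π/(t²+1) for all t, the renewal system Z_j(t) = X_j(t) + ∑_k (u_k Z_j(t-l_k) + v_k Z_{3-j}(t-l_k)) and Z_j(t) → 0 as t → -∞, one has |Z_j(t)| ≤ C·Π for all t ∈ ℝ and j = 1,2. -/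
open Filter

theorem stmt_6 (N : ℕ) (l u v : ℕ → ℝ)
    (hl : ∀ k ∈ Finset.Icc 1 N, 0 < l k)
    (hu : ∀ k, 0 ≤ u k) (hv : ∀ k, 0 ≤ v k)
    (hsum : ∑ k ∈ Finset.Icc 1 N, (u k + v k) = 1) :
    ∃ C : ℝ, 0 < C ∧
      ∀ (Pi0 : ℝ), 0 ≤ Pi0 →
      ∀ (X₁ X₂ Z₁ Z₂ : ℝ → ℝ),
        Continuous X₁ → Continuous X₂ → Continuous Z₁ → Continuous Z₂ →
        (∀ t, |X₁ t| ≤ Pi0 / (t ^ 2 + 1)) →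
        (∀ t, |X₂ t| ≤ Pi0 / (t ^ 2 + 1)) →
        (∀ t, Z₁ t = X₁ t + ∑ k ∈ Finset.Icc 1 N,
          (u k * Z₁ (t - l k) + v k * Z₂ (t - l k))) →
        (∀ t, Z₂ t = X₂ t + ∑ k ∈ Finset.Icc 1 N,
          (u k * Z₂ (t - l k) + v k * Z₁ (t - l k))) →
        Tendsto Z₁ atBot (nhds 0) → Tendsto Z₂ atBot (nhds 0) →
        ∀ t, |Z₁ t| ≤ C * Pi0 ∧ |Z₂ t| ≤ C * Pi0 := by
  classical
  have hne : (Finset.Icc 1 N).Nonempty := by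
    by_contra hc
    rw [Finset.not_nonempty_iff_eq_empty] at hc
    rw [hc, Finset.sum_empty] at hsum
    norm_num at hsum
  set L : ℝ := (Finset.Icc 1 N).inf' hne l with hLdef
  have hL : 0 < L := by
    rw [hLdef, Finset.lt_inf'_iff]; exact hl
  have hLle : ∀ k ∈ Finset.Icc 1 N, L ≤ l k := fun k hk => Finset.inf'_le _ hk
  set g : ℝ → ℝ := fun t => 1 / 2 + Real.arctan t / Real.pi with hgdef
  have hpi : (0:ℝ) < Real.pi := Real.pi_pos
  have hgmono : Monotone g := by
    intro a b hab
    simp only [hgdef]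
    have := Real.arctan_strictMono.monotone hab
    have := hpi
    gcongr
  have hg0 : ∀ t, 0 ≤ g t := by
    intro t
    have h1 := Real.neg_pi_div_two_lt_arctan t
    have : -(Real.pi / 2) / Real.pi ≤ Real.arctan t / Real.pi := by gcongr
    have heq : -(Real.pi / 2) / Real.pi = -(1/2) := by
      rw [div_eq_iff (ne_of_gt hpi)]; ring
    simp only [hgdef]
    rw [heq] at this
    linarith
  have hg1 : ∀ t, g t ≤ 1 := by
    intro t
    have h1 := Real.arctan_lt_pi_div_two t
    have : Real.arctan t / Real.pi ≤ (Real.pi / 2) / Real.pi := by gcongr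
    have heq : (Real.pi / 2) / Real.pi = 1/2 := by
      rw [div_eq_iff (ne_of_gt hpi)]; ring
    simp only [hgdef]
    rw [heq] at this
    linarith
  set K : ℝ := Real.pi * (2 + 2 * L ^ 2) / L with hKdef
  have hK : 0 < K := by
    apply div_pos
    · apply mul_pos hpi; nlinarith [sq_nonneg L]
    · exact hL
  -- key inequality
  have key : ∀ t : ℝ, 1 / (t ^ 2 + 1) + K * g (t - L) ≤ K * g t := by
    intro t
    have hlt : t - L < t := by linarith
    obtain ⟨c, hc, hcd⟩ := exists_hasDerivAt_eq_slope Real.arctan (fun x => 1 / (1 + x ^ 2))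
      hlt (Real.continuous_arctan.continuousOn)
      (fun x _ => Real.hasDerivAt_arctan x)
    have hc1 : t - L < c := hc.1
    have hc2 : c < t := hc.2
    have hden : (0:ℝ) < 1 + c ^ 2 := by positivity
    have hdiff : Real.arctan t - Real.arctan (t - L) = L / (1 + c ^ 2) := by
      have hbl : t - (t - L) = L := by ring
      rw [hbl] at hcd
      field_simp at hcd ⊢
      linarith [hcd]
    -- goal reduces to (1 + c^2) ≤ (2 + 2L^2)(t^2 + 1)
    have hcb : 1 + c ^ 2 ≤ (2 + 2 * L ^ 2) * (t ^ 2 + 1) := by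
      nlinarith [mul_nonneg (sub_nonneg.2 hc2.le) (sub_nonneg.2 (by linarith : t - L ≤ c)),
        sq_nonneg (t - L), sq_nonneg t, sq_nonneg (t * L), sq_nonneg (t + L), sq_nonneg (t*L - 1)]
    have hKg : K * g t - K * g (t - L) = (2 + 2 * L ^ 2) / L * (Real.arctan t - Real.arctan (t - L)) := by
      simp only [hgdef, hKdef]
      field_simp
      ring
    rw [hdiff] at hKg
    have ht1 : (0:ℝ) < t ^ 2 + 1 := by positivity
    have : (2 + 2 * L ^ 2) / L * (L / (1 + c ^ 2)) = (2 + 2 * L ^ 2) / (1 + c ^ 2) := by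
      field_simp
    rw [this] at hKg
    have hfin : 1 / (t ^ 2 + 1) ≤ (2 + 2 * L ^ 2) / (1 + c ^ 2) := by
      rw [div_le_div_iff₀ ht1 hden]
      nlinarith [hcb]
    linarith [hKg, hfin]
  refine ⟨K, hK, ?_⟩
  intro Pi0 hPi X₁ X₂ Z₁ Z₂ _ _ _ _ hX₁ hX₂ hZ₁ hZ₂ htd₁ htd₂ t
  have main : ∀ ε : ℝ, 0 < ε → ∀ s : ℝ,
      |Z₁ s| ≤ ε + K * Pi0 * g s ∧ |Z₂ s| ≤ ε + K * Pi0 * g s := by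
    intro ε hε
    have hev₁ : ∀ᶠ s in atBot, |Z₁ s| < ε := by
      have := Metric.tendsto_nhds.1 htd₁ ε hε
      filter_upwards [this] with s hs
      simpa [Real.dist_eq] using hs
    have hev₂ : ∀ᶠ s in atBot, |Z₂ s| < ε := by
      have := Metric.tendsto_nhds.1 htd₂ ε hε
      filter_upwards [this] with s hs
      simpa [Real.dist_eq] using hs
    obtain ⟨T, hT⟩ := eventually_atBot.1 (hev₁.and hev₂)
    have hKP : 0 ≤ K * Pi0 := mul_nonneg hK.le hPi
    have ind : ∀ n : ℕ, ∀ s : ℝ, s ≤ T + n * L →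
        |Z₁ s| ≤ ε + K * Pi0 * g s ∧ |Z₂ s| ≤ ε + K * Pi0 * g s := by
      intro n
      induction n with
      | zero =>
        intro s hs
        simp only [Nat.cast_zero, zero_mul, add_zero] at hs
        obtain ⟨h1, h2⟩ := hT s hs
        have := mul_nonneg hKP (hg0 s)
        exact ⟨by linarith, by linarith⟩
      | succ n ih =>
        intro s hs
        by_cases hcase : s ≤ T + n * L
        · exact ih s hcase
        · -- s - l k ≤ s - L ≤ T + n L
          push_neg at hcase
          have hsL : s - L ≤ T + n * L := by
            push_cast at hs ⊢
            linarith
          have hterm : ∀ k ∈ Finset.Icc 1 N,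
              |Z₁ (s - l k)| ≤ ε + K * Pi0 * g (s - L) ∧
              |Z₂ (s - l k)| ≤ ε + K * Pi0 * g (s - L) := by
            intro k hk
            have hlk := hLle k hk
            have h1 : s - l k ≤ T + n * L := by linarith
            obtain ⟨ha, hb⟩ := ih (s - l k) h1
            have hgm : g (s - l k) ≤ g (s - L) := hgmono (by linarith)
            have := mul_le_mul_of_nonneg_left hgm hKP
            exact ⟨by linarith, by linarith⟩
          have hsum' : ∀ (W₁ W₂ : ℝ → ℝ),
              (∀ k ∈ Finset.Icc 1 N, |W₁ (s - l k)| ≤ ε + K * Pi0 * g (s - L) ∧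
                |W₂ (s - l k)| ≤ ε + K * Pi0 * g (s - L)) →
              |∑ k ∈ Finset.Icc 1 N, (u k * W₁ (s - l k) + v k * W₂ (s - l k))| ≤
                ε + K * Pi0 * g (s - L) := by
            intro W₁ W₂ hW
            set B := ε + K * Pi0 * g (s - L) with hB
            calc |∑ k ∈ Finset.Icc 1 N, (u k * W₁ (s - l k) + v k * W₂ (s - l k))|
                ≤ ∑ k ∈ Finset.Icc 1 N, |u k * W₁ (s - l k) + v k * W₂ (s - l k)| :=
                  Finset.abs_sum_le_sum_abs _ _
              _ ≤ ∑ k ∈ Finset.Icc 1 N, (u k + v k) * B := by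
                  apply Finset.sum_le_sum
                  intro k hk
                  obtain ⟨ha, hb⟩ := hW k hk
                  calc |u k * W₁ (s - l k) + v k * W₂ (s - l k)|
                      ≤ |u k * W₁ (s - l k)| + |v k * W₂ (s - l k)| := abs_add_le _ _
                    _ = u k * |W₁ (s - l k)| + v k * |W₂ (s - l k)| := by
                        rw [abs_mul, abs_mul, abs_of_nonneg (hu k), abs_of_nonneg (hv k)]
                    _ ≤ u k * B + v k * B := by
                        gcongr
                        · exact hu k
                        · exact hv k
                    _ = (u k + v k) * B := by ring
              _ = B := by rw [← Finset.sum_mul, hsum, one_mul]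
          have hXb : |X₁ s| ≤ Pi0 / (s ^ 2 + 1) := hX₁ s
          have hXb2 : |X₂ s| ≤ Pi0 / (s ^ 2 + 1) := hX₂ s
          have hkeyP : Pi0 / (s ^ 2 + 1) + K * Pi0 * g (s - L) ≤ K * Pi0 * g s := by
            have := mul_le_mul_of_nonneg_left (key s) hPi
            have hs1 : (0:ℝ) < s ^ 2 + 1 := by positivity
            calc Pi0 / (s ^ 2 + 1) + K * Pi0 * g (s - L)
                = Pi0 * (1 / (s ^ 2 + 1) + K * g (s - L)) := by ring
              _ ≤ Pi0 * (K * g s) := this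
              _ = K * Pi0 * g s := by ring
          constructor
          · rw [hZ₁ s]
            calc |X₁ s + ∑ k ∈ Finset.Icc 1 N, (u k * Z₁ (s - l k) + v k * Z₂ (s - l k))|
                ≤ |X₁ s| + |∑ k ∈ Finset.Icc 1 N, (u k * Z₁ (s - l k) + v k * Z₂ (s - l k))| :=
                  abs_add_le _ _
              _ ≤ Pi0 / (s ^ 2 + 1) + (ε + K * Pi0 * g (s - L)) := by
                  exact add_le_add hXb (hsum' Z₁ Z₂ hterm)
              _ ≤ ε + K * Pi0 * g s := by linarith
          · rw [hZ₂ s]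
            calc |X₂ s + ∑ k ∈ Finset.Icc 1 N, (u k * Z₂ (s - l k) + v k * Z₁ (s - l k))|
                ≤ |X₂ s| + |∑ k ∈ Finset.Icc 1 N, (u k * Z₂ (s - l k) + v k * Z₁ (s - l k))| :=
                  abs_add_le _ _
              _ ≤ Pi0 / (s ^ 2 + 1) + (ε + K * Pi0 * g (s - L)) := by
                  exact add_le_add hXb2
                    (hsum' Z₂ Z₁ (fun k hk => ⟨(hterm k hk).2, (hterm k hk).1⟩))
              _ ≤ ε + K * Pi0 * g s := by linarith
    intro s
    obtain ⟨n, hn⟩ := exists_nat_ge ((s - T) / L)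
    have hsn : s ≤ T + n * L := by
      have := (div_le_iff₀ hL).1 hn
      linarith
    exact ind n s hsn
  have hKP : 0 ≤ K * Pi0 := mul_nonneg hK.le hPi
  have hfin : ∀ j : Bool, |(if j then Z₁ else Z₂) t| ≤ K * Pi0 := by
    intro j
    apply le_of_forall_pos_le_add
    intro ε hε
    have hm := main ε hε t
    have hg := mul_le_mul_of_nonneg_left (hg1 t) hKP
    cases j
    · simp only [if_neg Bool.false_ne_true]
      calc |Z₂ t| ≤ ε + K * Pi0 * g t := hm.2
        _ ≤ K * Pi0 + ε := by linarith [hg]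
    · simp only [if_pos rfl]
      calc |Z₁ t| ≤ ε + K * Pi0 * g t := hm.1
        _ ≤ K * Pi0 + ε := by linarith [hg]
  exact ⟨by simpa using hfin true, by simpa using hfin false⟩
end

section
/- Let l_1,...,l_N be positive reals and u_1,...,u_N, v_1,...,v_N nonnegative reals with ∑(u_k+v_k)=1. If continuous functions Z_1, Z_2 satisfy the homogeneous system Z_j(t) = ∑_{k=1}^N (u_k Z_j(t-l_k) + v_k Z_{3-j}(t-l_k)) for all t and Z_j(t) → 0 as t → -∞, then Z_1 = Z_2 = 0 identically. -/
open Filter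

theorem stmt_7 (N : ℕ) (l u v : ℕ → ℝ)
    (hl : ∀ k ∈ Finset.Icc 1 N, 0 < l k)
    (hu : ∀ k, 0 ≤ u k) (hv : ∀ k, 0 ≤ v k)
    (hsum : ∑ k ∈ Finset.Icc 1 N, (u k + v k) = 1)
    (Z₁ Z₂ : ℝ → ℝ) (hZ₁c : Continuous Z₁) (hZ₂c : Continuous Z₂)
    (heq₁ : ∀ t, Z₁ t = ∑ k ∈ Finset.Icc 1 N,
      (u k * Z₁ (t - l k) + v k * Z₂ (t - l k)))
    (heq₂ : ∀ t, Z₂ t = ∑ k ∈ Finset.Icc 1 N,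
      (u k * Z₂ (t - l k) + v k * Z₁ (t - l k)))
    (hlim₁ : Tendsto Z₁ atBot (nhds 0)) (hlim₂ : Tendsto Z₂ atBot (nhds 0)) :
    ∀ t, Z₁ t = 0 ∧ Z₂ t = 0 := by
  set f : ℝ → ℝ := fun t => max |Z₁ t| |Z₂ t| with hfdef
  have hfc : Continuous f := hZ₁c.abs.max hZ₂c.abs
  have hkey : ∀ t, f t ≤ ∑ k ∈ Finset.Icc 1 N, (u k + v k) * f (t - l k) := by
    intro t
    have h1 : |Z₁ t| ≤ ∑ k ∈ Finset.Icc 1 N, (u k + v k) * f (t - l k) := by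
      rw [heq₁ t]
      refine (Finset.abs_sum_le_sum_abs _ _).trans (Finset.sum_le_sum ?_)
      intro k hk
      rw [add_mul]
      refine (abs_add_le _ _).trans (add_le_add ?_ ?_)
      · rw [abs_mul, abs_of_nonneg (hu k)]
        exact mul_le_mul_of_nonneg_left (le_max_left _ _) (hu k)
      · rw [abs_mul, abs_of_nonneg (hv k)]
        exact mul_le_mul_of_nonneg_left (le_max_right _ _) (hv k)
    have h2 : |Z₂ t| ≤ ∑ k ∈ Finset.Icc 1 N, (u k + v k) * f (t - l k) := by
      rw [heq₂ t]
      refine (Finset.abs_sum_le_sum_abs _ _).trans (Finset.sum_le_sum ?_)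
      intro k hk
      rw [add_mul]
      refine (abs_add_le _ _).trans (add_le_add ?_ ?_)
      · rw [abs_mul, abs_of_nonneg (hu k)]
        exact mul_le_mul_of_nonneg_left (le_max_right _ _) (hu k)
      · rw [abs_mul, abs_of_nonneg (hv k)]
        exact mul_le_mul_of_nonneg_left (le_max_left _ _) (hv k)
    exact max_le h1 h2
  have hflim : Tendsto f atBot (nhds 0) := by
    have := hlim₁.abs.max hlim₂.abs
    simpa using this
  have hex : ∃ k ∈ Finset.Icc 1 N, 0 < u k + v k := by
    by_contra hc
    push_neg at hc
    have h0 : ∑ k ∈ Finset.Icc 1 N, (u k + v k) = 0 :=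
      Finset.sum_eq_zero fun k hk =>
        le_antisymm (hc k hk) (add_nonneg (hu k) (hv k))
    rw [h0] at hsum
    norm_num at hsum
  obtain ⟨k₀, hk₀, hk₀pos⟩ := hex
  have main : ∀ t, ∀ ε > (0:ℝ), f t ≤ ε := by
    intro t ε hε
    obtain ⟨T₀, hT₀⟩ := eventually_atBot.1 ((tendsto_order.1 hflim).2 ε hε)
    set T := min T₀ t with hT
    have hTle : T ≤ t := min_le_right _ _
    have hTsmall : ∀ s ≤ T, f s < ε := fun s hs =>
      hT₀ s (hs.trans (min_le_left _ _))
    obtain ⟨x, hx, hmax⟩ :=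
      isCompact_Icc.exists_isMaxOn (Set.nonempty_Icc.2 hTle) hfc.continuousOn
    set M := f x with hM
    have htM : f t ≤ M := hmax (Set.right_mem_Icc.2 hTle)
    rcases le_or_gt M ε with hMε | hMε
    · exact htM.trans hMε
    exfalso
    set A := Set.Icc T t ∩ f ⁻¹' Set.Ici M with hA
    have hAclosed : IsClosed A := isClosed_Icc.inter (isClosed_Ici.preimage hfc)
    have hAne : A.Nonempty := ⟨x, hx, le_refl M⟩
    have hAbdd : BddBelow A := bddBelow_Icc.mono Set.inter_subset_left
    set s₀ := sInf A with hs₀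
    have hs₀A : s₀ ∈ A := hAclosed.csInf_mem hAne hAbdd
    have hs₀Icc : s₀ ∈ Set.Icc T t := hs₀A.1
    have hfs₀ : f s₀ = M := le_antisymm (hmax hs₀Icc) hs₀A.2
    have hlt : ∀ k ∈ Finset.Icc 1 N, f (s₀ - l k) < M := by
      intro k hk
      have hlk := hl k hk
      have hs' : s₀ - l k < s₀ := by linarith
      rcases lt_or_ge (s₀ - l k) T with h | h
      · exact (hTsmall _ h.le).trans hMε
      · have hmem : s₀ - l k ∈ Set.Icc T t := ⟨h, hs'.le.trans hs₀Icc.2⟩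
        have hle : f (s₀ - l k) ≤ M := hmax hmem
        rcases hle.lt_or_eq with h' | h'
        · exact h'
        · exact absurd (csInf_le hAbdd ⟨hmem, h'.ge⟩) (not_le.2 hs')
    have hstrict : ∑ k ∈ Finset.Icc 1 N, (u k + v k) * f (s₀ - l k)
        < ∑ k ∈ Finset.Icc 1 N, (u k + v k) * M := by
      apply Finset.sum_lt_sum
      · intro k hk
        exact mul_le_mul_of_nonneg_left (hlt k hk).le (add_nonneg (hu k) (hv k))
      · exact ⟨k₀, hk₀, mul_lt_mul_of_pos_left (hlt k₀ hk₀) hk₀pos⟩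
    rw [← Finset.sum_mul, hsum, one_mul] at hstrict
    have h := hkey s₀
    rw [hfs₀] at h
    linarith
  have hfle : ∀ t, f t ≤ 0 := by
    intro t
    by_contra h
    push_neg at h
    have := main t (f t / 2) (by linarith)
    linarith
  intro t
  have h1 : |Z₁ t| ≤ 0 := (le_max_left _ _).trans (hfle t)
  have h2 : |Z₂ t| ≤ 0 := (le_max_right _ _).trans (hfle t)
  exact ⟨abs_eq_zero.mp (le_antisymm h1 (abs_nonneg _)),
    abs_eq_zero.mp (le_antisymm h2 (abs_nonneg _))⟩
end

section
/- Let u_1,...,u_N, v_1,...,v_N be nonnegative reals with ∑(u_k+v_k)=1 and ∑ v_k > 0, l_1,...,l_N positive reals, and J = ∑_k (u_k+v_k) l_k. Let ζ_1, ζ_2 be reals with ζ_1+ζ_2 ≠ 0. Fix any continuous Z_1 : ℝ → ℝ that equals 0 on a neighborhood of -∞ and equals (ζ_1+ζ_2)/(2J) on a neighborhood of +∞, and set Z_2(t) = Z_1(t-τ) where τ = J(ζ_1-ζ_2)/((ζ_1+ζ_2)·∑_k v_k). Define X_j(t) = Z_j(t) - ∑_k (u_k Z_j(t-l_k) + v_k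 Z_{3-j}(t-l_k)). Then X_1 and X_2 have compact support, ∫_ℝ X_1 dμ = ζ_1 and ∫_ℝ X_2 dμ = ζ_2. -/
open Filter MeasureTheory

private lemma shift_int (f : ℝ → ℝ) (hf : Continuous f) (a b c : ℝ)
    (h0 : ∀ t ≤ a, f t = 0) (hc : ∀ t ≥ b, f t = c) (s : ℝ) :
    Integrable (fun t => f t - f (t - s)) ∧
    (∫ t, (f t - f (t - s))) = s * c := by
  have hcont : Continuous (fun t : ℝ => f t - f (t - s)) :=
    hf.sub (hf.comp (continuous_id.sub continuous_const))
  set A : ℝ := min a b - |s| with hA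
  set B : ℝ := max a b + |s| with hB
  have habs1 : -|s| ≤ s := neg_abs_le s
  have habs2 : s ≤ |s| := le_abs_self s
  have habs0 : 0 ≤ |s| := abs_nonneg s
  have hmina : min a b ≤ a := min_le_left a b
  have hmaxb : b ≤ max a b := le_max_right a b
  have hminmax : min a b ≤ max a b := min_le_max
  have hAB : A ≤ B := by rw [hA, hB]; linarith
  have hzero : ∀ t : ℝ, t ∉ Set.Icc A B → f t - f (t - s) = 0 := by
    intro t ht
    rw [Set.mem_Icc] at ht; push_neg at ht
    by_cases h : A ≤ t
    · have hBt := ht h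
      rw [hB] at hBt
      have h1 : f t = c := hc t (by linarith)
      have h2 : f (t - s) = c := hc _ (by linarith)
      rw [h1, h2, sub_self]
    · push_neg at h
      rw [hA] at h
      have h1 : f t = 0 := h0 t (by linarith)
      have h2 : f (t - s) = 0 := h0 _ (by linarith)
      rw [h1, h2, sub_self]
  have hcs : HasCompactSupport fun t : ℝ => f t - f (t - s) :=
    HasCompactSupport.intro isCompact_Icc hzero
  have hint : Integrable fun t : ℝ => f t - f (t - s) :=
    hcont.integrable_of_hasCompactSupport hcs
  refine ⟨hint, ?_⟩
  have h1 : (∫ t, (f t - f (t - s))) = ∫ t in Set.Icc A B, (f t - f (t - s)) :=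
    (setIntegral_eq_integral_of_forall_compl_eq_zero hzero).symm
  have hfs : Continuous fun t : ℝ => f (t - s) :=
    hf.comp (continuous_id.sub continuous_const)
  rw [h1, integral_Icc_eq_integral_Ioc, ← intervalIntegral.integral_of_le hAB]
  rw [intervalIntegral.integral_sub (hf.intervalIntegrable A B)
    (hfs.intervalIntegrable A B)]
  rw [intervalIntegral.integral_comp_sub_right f s]
  have add1 : (∫ t in (A-s)..A, f t) + (∫ t in A..B, f t) = ∫ t in (A-s)..B, f t :=
    intervalIntegral.integral_add_adjacent_intervals (hf.intervalIntegrable _ _)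
      (hf.intervalIntegrable _ _)
  have add2 : (∫ t in (A-s)..(B-s), f t) + (∫ t in (B-s)..B, f t) = ∫ t in (A-s)..B, f t :=
    intervalIntegral.integral_add_adjacent_intervals (hf.intervalIntegrable _ _)
      (hf.intervalIntegrable _ _)
  have e1 : (∫ t in (A-s)..A, f t) = 0 := by
    have hcg : Set.EqOn f (fun _ => (0:ℝ)) (Set.uIcc (A - s) A) := by
      intro t ht
      rw [Set.mem_uIcc] at ht
      apply h0
      rcases ht with ⟨_, h2⟩ | ⟨_, h2⟩ <;> rw [hA] at h2 <;> linarith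
    rw [intervalIntegral.integral_congr hcg]
    simp
  have e2 : (∫ t in (B-s)..B, f t) = s * c := by
    have hcg : Set.EqOn f (fun _ => c) (Set.uIcc (B - s) B) := by
      intro t ht
      rw [Set.mem_uIcc] at ht
      apply hc
      rcases ht with ⟨h2, _⟩ | ⟨h2, _⟩ <;> rw [hB] at h2 <;> linarith
    rw [intervalIntegral.integral_congr hcg, intervalIntegral.integral_const, smul_eq_mul]
    ring
  linarith

theorem stmt_12 (N : ℕ) (l u v : ℕ → ℝ)
    (hl : ∀ k ∈ Finset.Icc 1 N, 0 < l k)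
    (hu : ∀ k, 0 ≤ u k) (hv : ∀ k, 0 ≤ v k)
    (hsum : ∑ k ∈ Finset.Icc 1 N, (u k + v k) = 1)
    (hvpos : 0 < ∑ k ∈ Finset.Icc 1 N, v k)
    (J : ℝ) (hJ : J = ∑ k ∈ Finset.Icc 1 N, (u k + v k) * l k)
    (ζ₁ ζ₂ : ℝ) (hζ : ζ₁ + ζ₂ ≠ 0)
    (τ : ℝ) (hτ : τ = J * (ζ₁ - ζ₂) / ((ζ₁ + ζ₂) * ∑ k ∈ Finset.Icc 1 N, v k))
    (Z₁ Z₂ : ℝ → ℝ) (hZ₁c : Continuous Z₁)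
    (ha : ∃ a : ℝ, ∀ t ≤ a, Z₁ t = 0)
    (hb : ∃ b : ℝ, ∀ t ≥ b, Z₁ t = (ζ₁ + ζ₂) / (2 * J))
    (hZ₂ : ∀ t, Z₂ t = Z₁ (t - τ))
    (X₁ X₂ : ℝ → ℝ)
    (hX₁ : ∀ t, X₁ t = Z₁ t - ∑ k ∈ Finset.Icc 1 N,
      (u k * Z₁ (t - l k) + v k * Z₂ (t - l k)))
    (hX₂ : ∀ t, X₂ t = Z₂ t - ∑ k ∈ Finset.Icc 1 N,
      (u k * Z₂ (t - l k) + v k * Z₁ (t - l k))) :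
    HasCompactSupport X₁ ∧ HasCompactSupport X₂ ∧
    (∫ t : ℝ, X₁ t) = ζ₁ ∧ (∫ t : ℝ, X₂ t) = ζ₂ := by
  obtain ⟨a, ha⟩ := ha
  obtain ⟨b, hb⟩ := hb
  -- positivity of J
  obtain ⟨k₀, hk₀S, hk₀⟩ : ∃ k ∈ Finset.Icc 1 N, (0:ℝ) < v k := by
    by_contra hcon
    push_neg at hcon
    have : ∑ k ∈ Finset.Icc 1 N, v k ≤ 0 := Finset.sum_nonpos hcon
    linarith
  have hJpos : 0 < J := by
    rw [hJ]
    refine Finset.sum_pos' (fun k hk => mul_nonneg (by have := hu k; have := hv k; linarith)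
      (hl k hk).le) ⟨k₀, hk₀S, mul_pos (by have := hu k₀; linarith) (hl k₀ hk₀S)⟩
  have hJne : J ≠ 0 := ne_of_gt hJpos
  have hVne : (∑ k ∈ Finset.Icc 1 N, v k) ≠ 0 := ne_of_gt hvpos
  set c : ℝ := (ζ₁ + ζ₂) / (2 * J) with hc
  -- compact support data
  set L : ℝ := ∑ k ∈ Finset.Icc 1 N, l k with hLdef
  have hL0 : 0 ≤ L := Finset.sum_nonneg fun k hk => (hl k hk).le
  have hLk : ∀ k ∈ Finset.Icc 1 N, l k ≤ L := fun k hk =>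
    Finset.single_le_sum (fun j hj => (hl j hj).le) hk
  have habs1 : -|τ| ≤ τ := neg_abs_le τ
  have habs2 : τ ≤ |τ| := le_abs_self τ
  have habs0 : 0 ≤ |τ| := abs_nonneg τ
  have hmina : min a b ≤ a := min_le_left a b
  have hminb : min a b ≤ b := min_le_right a b
  have hmaxa : a ≤ max a b := le_max_left a b
  have hmaxb : b ≤ max a b := le_max_right a b
  set A : ℝ := min a b - (L + |τ|) with hAdef
  set B : ℝ := max a b + (L + |τ|) with hBdef
  have hsupp1 : HasCompactSupport X₁ := by
    refine HasCompactSupport.intro (isCompact_Icc (a := A) (b := B)) ?_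
    intro t ht
    rw [Set.mem_Icc] at ht; push_neg at ht
    rw [hX₁]
    by_cases h : A ≤ t
    · have hBt := ht h
      rw [hBdef] at hBt
      have h1 : Z₁ t = c := hb t (by linarith)
      have h2 : ∀ k ∈ Finset.Icc 1 N,
          u k * Z₁ (t - l k) + v k * Z₂ (t - l k) = (u k + v k) * c := by
        intro k hk
        have hlk := hLk k hk
        have hlkpos := hl k hk
        rw [hZ₂, hb (t - l k) (by linarith), hb (t - l k - τ) (by linarith)]
        ring
      rw [Finset.sum_congr rfl h2, ← Finset.sum_mul, hsum, one_mul, h1, sub_self]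
    · push_neg at h
      rw [hAdef] at h
      have h1 : Z₁ t = 0 := ha t (by linarith)
      have h2 : ∀ k ∈ Finset.Icc 1 N,
          u k * Z₁ (t - l k) + v k * Z₂ (t - l k) = 0 := by
        intro k hk
        have hlkpos := hl k hk
        rw [hZ₂, ha (t - l k) (by linarith), ha (t - l k - τ) (by linarith)]
        ring
      rw [Finset.sum_eq_zero h2, h1, sub_self]
  have hsupp2 : HasCompactSupport X₂ := by
    refine HasCompactSupport.intro (isCompact_Icc (a := A) (b := B)) ?_
    intro t ht
    rw [Set.mem_Icc] at ht; push_neg at ht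
    rw [hX₂]
    by_cases h : A ≤ t
    · have hBt := ht h
      rw [hBdef] at hBt
      have h1 : Z₂ t = c := by rw [hZ₂]; exact hb (t - τ) (by linarith)
      have h2 : ∀ k ∈ Finset.Icc 1 N,
          u k * Z₂ (t - l k) + v k * Z₁ (t - l k) = (u k + v k) * c := by
        intro k hk
        have hlk := hLk k hk
        have hlkpos := hl k hk
        rw [hZ₂, hb (t - l k) (by linarith), hb (t - l k - τ) (by linarith)]
        ring
      rw [Finset.sum_congr rfl h2, ← Finset.sum_mul, hsum, one_mul, h1, sub_self]
    · push_neg at h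
      rw [hAdef] at h
      have h1 : Z₂ t = 0 := by rw [hZ₂]; exact ha (t - τ) (by linarith)
      have h2 : ∀ k ∈ Finset.Icc 1 N,
          u k * Z₂ (t - l k) + v k * Z₁ (t - l k) = 0 := by
        intro k hk
        have hlkpos := hl k hk
        rw [hZ₂, ha (t - l k) (by linarith), ha (t - l k - τ) (by linarith)]
        ring
      rw [Finset.sum_eq_zero h2, h1, sub_self]
  -- the key integral lemma
  have key : ∀ s : ℝ, Integrable (fun t => Z₁ t - Z₁ (t - s)) ∧
      (∫ t, (Z₁ t - Z₁ (t - s))) = s * c :=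
    fun s => shift_int Z₁ hZ₁c a b c ha hb s
  -- X₁ integral
  have sum_eq1 : ∀ t, ∑ k ∈ Finset.Icc 1 N,
      (u k * (Z₁ t - Z₁ (t - l k)) + v k * (Z₁ t - Z₁ (t - (l k + τ)))) = X₁ t := by
    intro t
    have expand : ∀ k ∈ Finset.Icc 1 N,
        u k * (Z₁ t - Z₁ (t - l k)) + v k * (Z₁ t - Z₁ (t - (l k + τ))) =
        (u k + v k) * Z₁ t - (u k * Z₁ (t - l k) + v k * Z₂ (t - l k)) := by
      intro k hk
      rw [hZ₂, show t - l k - τ = t - (l k + τ) by ring]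
      ring
    rw [Finset.sum_congr rfl expand, Finset.sum_sub_distrib, ← Finset.sum_mul, hsum, one_mul,
      ← hX₁ t]
  have hX₁' : X₁ = fun t => ∑ k ∈ Finset.Icc 1 N,
      (u k * (Z₁ t - Z₁ (t - l k)) + v k * (Z₁ t - Z₁ (t - (l k + τ)))) :=
    funext fun t => (sum_eq1 t).symm
  have intA : ∀ r s : ℝ, Integrable (fun t => r * (Z₁ t - Z₁ (t - s))) :=
    fun r s => by exact (key s).1.const_mul r
  have int1 : (∫ t, X₁ t) = ζ₁ := by
    have intk : ∀ k ∈ Finset.Icc 1 N, Integrable (fun t =>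
        u k * (Z₁ t - Z₁ (t - l k)) + v k * (Z₁ t - Z₁ (t - (l k + τ)))) :=
      fun k _ => by exact (intA (u k) (l k)).add (intA (v k) (l k + τ))
    have e1 : (∫ t, X₁ t) = ∑ k ∈ Finset.Icc 1 N,
        (u k * (l k * c) + v k * ((l k + τ) * c)) := by
      rw [hX₁', integral_finset_sum _ intk]
      refine Finset.sum_congr rfl fun k hk => ?_
      rw [integral_add (intA (u k) (l k)) (intA (v k) (l k + τ)),
        integral_const_mul, integral_const_mul, (key (l k)).2, (key (l k + τ)).2]
    rw [e1]
    have e2 : ∑ k ∈ Finset.Icc 1 N, (u k * (l k * c) + v k * ((l k + τ) * c)) =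
        (∑ k ∈ Finset.Icc 1 N, (u k + v k) * l k) * c +
        (∑ k ∈ Finset.Icc 1 N, v k) * (τ * c) := by
      rw [Finset.sum_mul, Finset.sum_mul, ← Finset.sum_add_distrib]
      exact Finset.sum_congr rfl fun k _ => by ring
    rw [e2, ← hJ, hτ, hc]
    field_simp
    ring
  -- X₂ integral
  have sum_eq2 : ∀ t, ∑ k ∈ Finset.Icc 1 N,
      (u k * (Z₁ (t - τ) - Z₁ (t - τ - l k)) +
       v k * (Z₁ (t - τ) - Z₁ (t - τ - (l k - τ)))) = X₂ t := by
    intro t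
    have expand : ∀ k ∈ Finset.Icc 1 N,
        u k * (Z₁ (t - τ) - Z₁ (t - τ - l k)) +
        v k * (Z₁ (t - τ) - Z₁ (t - τ - (l k - τ))) =
        (u k + v k) * Z₂ t - (u k * Z₂ (t - l k) + v k * Z₁ (t - l k)) := by
      intro k hk
      rw [hZ₂ t, hZ₂ (t - l k), show t - l k - τ = t - τ - l k by ring,
        show t - l k = t - τ - (l k - τ) by ring]
      ring
    rw [Finset.sum_congr rfl expand, Finset.sum_sub_distrib, ← Finset.sum_mul, hsum, one_mul,
      ← hX₂ t]
  have hX₂' : X₂ = (fun t => ∑ k ∈ Finset.Icc 1 N,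
      (u k * (Z₁ t - Z₁ (t - l k)) + v k * (Z₁ t - Z₁ (t - (l k - τ))))) ∘
      (fun t => t - τ) := by
    funext t
    exact (sum_eq2 t).symm
  have int2 : (∫ t, X₂ t) = ζ₂ := by
    have e0 : (∫ t, X₂ t) = ∫ t, ∑ k ∈ Finset.Icc 1 N,
        (u k * (Z₁ t - Z₁ (t - l k)) + v k * (Z₁ t - Z₁ (t - (l k - τ)))) := by
      rw [hX₂']
      exact MeasureTheory.integral_sub_right_eq_self
        (fun t : ℝ => ∑ k ∈ Finset.Icc 1 N,
          (u k * (Z₁ t - Z₁ (t - l k)) + v k * (Z₁ t - Z₁ (t - (l k - τ))))) τ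
    have intk : ∀ k ∈ Finset.Icc 1 N, Integrable (fun t =>
        u k * (Z₁ t - Z₁ (t - l k)) + v k * (Z₁ t - Z₁ (t - (l k - τ)))) :=
      fun k _ => by exact (intA (u k) (l k)).add (intA (v k) (l k - τ))
    rw [e0, integral_finset_sum _ intk]
    have e1 : ∀ k ∈ Finset.Icc 1 N,
        (∫ t, (u k * (Z₁ t - Z₁ (t - l k)) + v k * (Z₁ t - Z₁ (t - (l k - τ))))) =
        u k * (l k * c) + v k * ((l k - τ) * c) := by
      intro k hk
      rw [integral_add (intA (u k) (l k)) (intA (v k) (l k - τ)),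
        integral_const_mul, integral_const_mul, (key (l k)).2, (key (l k - τ)).2]
    rw [Finset.sum_congr rfl e1]
    have e2 : ∑ k ∈ Finset.Icc 1 N, (u k * (l k * c) + v k * ((l k - τ) * c)) =
        (∑ k ∈ Finset.Icc 1 N, (u k + v k) * l k) * c -
        (∑ k ∈ Finset.Icc 1 N, v k) * (τ * c) := by
      rw [Finset.sum_mul, Finset.sum_mul, ← Finset.sum_sub_distrib]
      exact Finset.sum_congr rfl fun k _ => by ring
    rw [e2, ← hJ, hτ, hc]
    field_simp
    ring
  exact ⟨hsupp1, hsupp2, int1, int2⟩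
end
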